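/- Let 𝒜° be the set of finite connected acyclic quivers with a unique source, every vertex meeting at least two arrows, and l(Q) ≤ 1. The relation Q ⇝ Q' (删除 one arrow α where either s(α) is not a source or t(α) is not a sink and there is another path from s(α) to t(α), or s(α) is a source, t(α) a sink with ≥3 paths and ≥2 parallel arrows between them) preserves l_Q: if Q ⇝ Q' then l_Q(i,j) = l_{Q'}(i,j) for all vertices i,j. -/
import Mathlib


/-! Quivers are encoded here by their arrow-multiplicity function
`G : V → V → ℕ` (`G a b` = number of arrows `a → b`); the function `l_Q`
only depends on the underlying adjacency relation `fun a b => 0 < G a b`. -/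

/-- Walks in the double quiver of the quiver with adjacency relation `E`. -/
inductive RWalk {V : Type} (E : V → V → Prop) : V → V → Type where
  | nil : (a : V) → RWalk E a a
  | fwd : {a b c : V} → RWalk E a b → E b c → RWalk E a c
  | bwd : {a b c : V} → RWalk E a b → E c b → RWalk E a c

/-- `c⁺(w)`: the number of forward arrows used by a walk. -/
def RWalk.cplus {V : Type} {E : V → V → Prop} : {a b : V} → RWalk E a b → ℕ
  | _, _, .nil _ => 0
  | _, _, .fwd w _ => RWalk.cplus w + 1
  | _, _, .bwd w _ => RWalk.cplus w

/-- `l_Q(i,j)`: minimal number of forward arrows over walks from `i` to `j`. -/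
noncomputable def rell {V : Type} (E : V → V → Prop) (i j : V) : ℕ :=
  sInf {m | ∃ w : RWalk E i j, RWalk.cplus w = m}

/-- Directed paths in the quiver. -/
inductive RPath {V : Type} (E : V → V → Prop) : V → V → Type where
  | nil : (a : V) → RPath E a a
  | cons : {a b c : V} → RPath E a b → E b c → RPath E a c

def RPath.length {V : Type} {E : V → V → Prop} : {a b : V} → RPath E a b → ℕ
  | _, _, .nil _ => 0
  | _, _, .cons p _ => RPath.length p + 1

section Aux

variable {V : Type}

/-- Composition of directed paths. -/
def RPath.comp {E : V → V → Prop} : {a b c : V} → RPath E a b → RPath E b c → RPath E a c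
  | _, _, _, p, .nil _ => p
  | _, _, _, p, .cons q e => .cons (RPath.comp p q) e

lemma RPath.comp_length {E : V → V → Prop} {a b c : V} (p : RPath E a b) (q : RPath E b c) :
    (RPath.comp p q).length = p.length + q.length := by
  induction q with
  | nil => simp [RPath.comp, RPath.length]
  | cons q e ih => simp [RPath.comp, RPath.length, ih]; omega

/-- Concatenation of walks. -/
def RWalk.append {E : V → V → Prop} : {a b c : V} → RWalk E a b → RWalk E b c → RWalk E a c
  | _, _, _, w, .nil _ => w
  | _, _, _, w, .fwd u e => .fwd (RWalk.append w u) e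
  | _, _, _, w, .bwd u e => .bwd (RWalk.append w u) e

lemma RWalk.cplus_append {E : V → V → Prop} {a b c : V} (w : RWalk E a b) (u : RWalk E b c) :
    (RWalk.append w u).cplus = w.cplus + u.cplus := by
  induction u with
  | nil => simp [RWalk.append, RWalk.cplus]
  | fwd u e ih => simp [RWalk.append, RWalk.cplus, ih]; omega
  | bwd u e ih => simp [RWalk.append, RWalk.cplus, ih]

/-- Traversing a directed path backwards as a walk (with no forward arrows). -/
def RPath.toBwd {E : V → V → Prop} : {a b : V} → RPath E a b → RWalk E b a
  | _, _, .nil a => .nil a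
  | _, _, .cons p e => RWalk.append (.bwd (.nil _) e) (RPath.toBwd p)

lemma RPath.toBwd_cplus {E : V → V → Prop} {a b : V} (p : RPath E a b) :
    (RPath.toBwd p).cplus = 0 := by
  induction p with
  | nil => simp [RPath.toBwd, RWalk.cplus]
  | cons p e ih => simp [RPath.toBwd, RWalk.cplus_append, RWalk.cplus, ih]

/-- A walk with no forward arrows yields a directed path in the reverse direction. -/
lemma RWalk.zero_path {E : V → V → Prop} {i j : V} (w : RWalk E i j) (h : w.cplus = 0) :
    Nonempty (RPath E j i) := by
  induction w with
  | nil => exact ⟨.nil _⟩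
  | fwd w e ih => simp [RWalk.cplus] at h
  | bwd w e ih =>
      obtain ⟨q⟩ := ih (by simpa [RWalk.cplus] using h)
      exact ⟨RPath.comp (.cons (.nil _) e) q⟩

/-- A walk with exactly one forward arrow decomposes via a witnessing arrow. -/
lemma RWalk.one_path {E : V → V → Prop} {i j : V} (w : RWalk E i j) (h : w.cplus = 1) :
    ∃ a b, E a b ∧ Nonempty (RPath E a i) ∧ Nonempty (RPath E j b) := by
  induction w with
  | nil => simp [RWalk.cplus] at h
  | @fwd b0 c0 w e ih =>
      have h0 : RWalk.cplus w = 0 := by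
        simp only [RWalk.cplus] at h
        omega
      obtain ⟨q⟩ := RWalk.zero_path w h0
      refine ⟨b0, c0, e, ⟨q⟩, ⟨.nil c0⟩⟩
  | bwd w e ih =>
      obtain ⟨a, b, he, hq, ⟨r⟩⟩ := ih (by simpa [RWalk.cplus] using h)
      exact ⟨a, b, he, hq, ⟨RPath.comp (.cons (.nil _) e) r⟩⟩

/-- Whether a path uses the arrow `x → y`. -/
def RPath.uses {E : V → V → Prop} (x y : V) : {a b : V} → RPath E a b → Prop
  | _, _, .nil _ => False
  | _, _, @RPath.cons _ _ _ b c p _ => (b = x ∧ c = y) ∨ RPath.uses x y p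

lemma RPath.uses_split {E : V → V → Prop} {x y : V} {a b : V} (p : RPath E a b)
    (h : RPath.uses x y p) :
    ∃ (q : RPath E a x) (r : RPath E y b), q.length + r.length + 1 = p.length := by
  induction p with
  | nil => simp [RPath.uses] at h
  | cons p e ih =>
      simp only [RPath.uses] at h
      rcases h with ⟨rfl, rfl⟩ | h
      · exact ⟨p, .nil _, by simp [RPath.length]⟩
      · obtain ⟨q, r, hl⟩ := ih h
        exact ⟨q, .cons r e, by simp [RPath.length]; omega⟩

/-- A path avoiding the arrow `x → y` lives in the reduced quiver. -/
lemma RPath.mapNotUses {E E' : V → V → Prop} {x y : V}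
    (h : ∀ a b, E a b → ¬(a = x ∧ b = y) → E' a b)
    {a b : V} (p : RPath E a b) (hn : ¬ RPath.uses x y p) :
    Nonempty (RPath E' a b) := by
  induction p with
  | nil => exact ⟨.nil _⟩
  | cons p e ih =>
      simp only [RPath.uses, not_or] at hn
      obtain ⟨q⟩ := ih hn.2
      exact ⟨.cons q (h _ _ e hn.1)⟩

/-- Paths transfer along an inclusion of adjacency relations. -/
lemma RPath.mapH {E F : V → V → Prop} (h : ∀ a b, E a b → F a b)
    {a b : V} (p : RPath E a b) : Nonempty (RPath F a b) := by
  induction p with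
  | nil => exact ⟨.nil _⟩
  | cons p e ih => obtain ⟨q⟩ := ih; exact ⟨.cons q (h _ _ e)⟩

/-- Reachability is unchanged by the reduction, given a replacement path `p'`. -/
lemma reach_all {E E' : V → V → Prop} {x y : V}
    (hE' : ∀ a b, E a b → ¬(a = x ∧ b = y) → E' a b)
    (p' : RPath E' x y) {a b : V} (p : RPath E a b) :
    Nonempty (RPath E' a b) := by
  induction p with
  | nil => exact ⟨.nil _⟩
  | @cons b0 c0 p e ih =>
      obtain ⟨q⟩ := ih
      by_cases hbc : b0 = x ∧ c0 = y
      · obtain ⟨rfl, rfl⟩ := hbc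
        exact ⟨RPath.comp q p'⟩
      · exact ⟨.cons q (hE' _ _ e hbc)⟩

lemma rell_le_of_walk {E : V → V → Prop} {i j : V} (w : RWalk E i j) :
    rell E i j ≤ w.cplus :=
  Nat.sInf_le ⟨w, rfl⟩

lemma exists_walk_rell {E : V → V → Prop} {i j : V} (h : Nonempty (RWalk E i j)) :
    ∃ w : RWalk E i j, w.cplus = rell E i j :=
  Nat.sInf_mem (⟨_, h.some, rfl⟩ : {m | ∃ w : RWalk E i j, RWalk.cplus w = m}.Nonempty)

end Aux

/-- Let `Q ∈ 𝒜°`: a finite connected acyclic quiver with a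
unique source, in which every vertex meets at least two arrows and
`l(Q) = max l_Q ≤ 1`.  Suppose `Q ⇝ Q'` where `Q'` is obtained from `Q` by
deleting one arrow `α : x → y` such that either
(1) (`s(α)` is not a source or `t(α)` is not a sink) and there is a path
`w ≠ α` from `x` to `y` (i.e. a second parallel arrow or a path of length
`≥ 2`), or
(2) `s(α)` is a source, `t(α)` is a sink, there are at least three paths from
`x` to `y` and at least two parallel arrows `x → y`.
Then `l_Q(i,j) = l_{Q'}(i,j)` for all vertices `i, j`. -/
theorem reduction_preserves_ell {V : Type} [Fintype V] [DecidableEq V]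
    (G : V → V → ℕ)
    (hconn : ∀ a b : V, Nonempty (RWalk (fun a b => 0 < G a b) a b))
    (hacyc : ∀ (a : V) (p : RPath (fun a b => 0 < G a b) a a), RPath.length p = 0)
    (hb : ∀ v : V, 1 < ∑ u : V, (G v u + G u v))
    (hsrc : ∃ s : V, (∀ z : V, G z s = 0) ∧ ∀ t : V, (∀ z : V, G z t = 0) → t = s)
    (hl1 : ∀ a b : V, rell (fun a b => 0 < G a b) a b ≤ 1)
    (x y : V) (hα : 0 < G x y)
    (hcond :
      (((¬ ∀ z : V, G z x = 0) ∨ (¬ ∀ z : V, G y z = 0)) ∧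
        (2 ≤ G x y ∨ ∃ p : RPath (fun a b => 0 < G a b) x y, 2 ≤ RPath.length p)) ∨
      ((∀ z : V, G z x = 0) ∧ (∀ z : V, G y z = 0) ∧ 2 ≤ G x y ∧
        (3 ≤ G x y ∨ ∃ p : RPath (fun a b => 0 < G a b) x y, 2 ≤ RPath.length p))) :
    ∀ i j : V,
      rell (fun a b => 0 < G a b) i j =
      rell (fun a b => if a = x ∧ b = y then 1 < G a b else 0 < G a b) i j := by
  intro i j
  by_cases h2 : 2 ≤ G x y
  · -- removing one of several parallel arrows does not change the adjacency relation
    have heq : (fun a b : V => if a = x ∧ b = y then 1 < G a b else 0 < G a b)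
        = fun a b : V => 0 < G a b := by
      funext a b
      by_cases h : a = x ∧ b = y
      · rw [if_pos h]
        obtain ⟨rfl, rfl⟩ := h
        exact propext ⟨fun _ => by omega, fun _ => by omega⟩
      · simp [h]
    rw [heq]
  · have hxy1 : G x y = 1 := by omega
    have hns : (¬ ∀ z : V, G z x = 0) ∨ (¬ ∀ z : V, G y z = 0) := by
      rcases hcond with ⟨hns0, _⟩ | ⟨_, _, h2', _⟩
      · exact hns0
      · omega
    -- the replacement path of length ≥ 2
    obtain ⟨p, hplen⟩ : ∃ p : RPath (fun a b => 0 < G a b) x y, 2 ≤ RPath.length p := by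
      rcases hcond with ⟨_, h | h⟩ | ⟨_, _, h, _⟩
      · omega
      · exact h
      · omega
    have hxy : x ≠ y := by
      intro h
      subst h
      have := hacyc x (.cons (.nil x) hα)
      simp [RPath.length] at this
    have hEE' : ∀ a b : V, 0 < G a b → ¬(a = x ∧ b = y) →
        (if a = x ∧ b = y then 1 < G a b else 0 < G a b) := by
      intro a b hab h
      simpa [if_neg h] using hab
    have hE'E : ∀ a b : V, (if a = x ∧ b = y then 1 < G a b else 0 < G a b) → 0 < G a b := by
      intro a b hab
      by_cases h : a = x ∧ b = y
      · rw [if_pos h] at hab; omega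
      · rwa [if_neg h] at hab
    -- p avoids the arrow x → y, by acyclicity
    have hnu : ¬ RPath.uses x y p := by
      intro hu
      obtain ⟨q, r, hl⟩ := RPath.uses_split p hu
      have hq := hacyc x q
      have hr := hacyc y r
      omega
    set E' : V → V → Prop := fun a b => if a = x ∧ b = y then 1 < G a b else 0 < G a b
      with hE'def
    obtain ⟨p'⟩ : Nonempty (RPath E' x y) := RPath.mapNotUses hEE' p hnu
    have hreach : ∀ {a b : V}, RPath (fun a b => 0 < G a b) a b → Nonempty (RPath E' a b) :=
      fun q => reach_all hEE' p' q
    obtain ⟨w, hw⟩ := exists_walk_rell (hconn i j)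
    have hn1 : rell (fun a b => 0 < G a b) i j ≤ 1 := hl1 i j
    have hcase : rell (fun a b => 0 < G a b) i j = 0 ∨
        rell (fun a b => 0 < G a b) i j = 1 := by omega
    rcases hcase with h0 | h1
    · -- there is a directed path from j to i; it transfers to E'
      obtain ⟨q⟩ := RWalk.zero_path w (hw.trans h0)
      obtain ⟨q'⟩ := hreach q
      have hle : rell E' i j ≤ 0 := by
        have := rell_le_of_walk (RPath.toBwd q')
        rwa [RPath.toBwd_cplus] at this
      rw [h0]
      omega
    · -- decompose a minimal walk
      obtain ⟨a, b, hab, ⟨q⟩, ⟨r⟩⟩ := RWalk.one_path w (hw.trans h1)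
      -- find a witnessing arrow surviving in E'
      have key : ∃ a' b', E' a' b' ∧ Nonempty (RPath E' a' i) ∧ Nonempty (RPath E' j b') := by
        by_cases hab' : a = x ∧ b = y
        · have qx : RPath (fun a b => 0 < G a b) x i := by
            rw [← hab'.1]; exact q
          have ry : RPath (fun a b => 0 < G a b) j y := by
            rw [← hab'.2]; exact r
          rcases hns with hx | hy
          · push_neg at hx
            obtain ⟨z, hz⟩ := hx
            have hzx : 0 < G z x := Nat.pos_of_ne_zero hz
            obtain ⟨u, hu⟩ := exists_walk_rell (hconn z j)
            have hm := hl1 z j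
            have hmc : rell (fun a b => 0 < G a b) z j = 0 ∨
                rell (fun a b => 0 < G a b) z j = 1 := by omega
            rcases hmc with hm0 | hm1
            · obtain ⟨s⟩ := RWalk.zero_path u (hu.trans hm0)
              refine ⟨z, x, hEE' _ _ hzx (fun h => hxy h.2), ?_, ?_⟩
              · exact hreach (RPath.comp (.cons (.nil z) hzx) qx)
              · exact hreach (RPath.comp s (.cons (.nil z) hzx))
            · obtain ⟨a', b', hab'', ⟨q'⟩, ⟨r'⟩⟩ := RWalk.one_path u (hu.trans hm1)
              -- q' : RPath E a' z, r' : RPath E j b'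
              by_cases hxy' : a' = x ∧ b' = y
              · exfalso
                have qz : RPath (fun a b => 0 < G a b) x z := by
                  rw [← hxy'.1]; exact q'
                have hcyc := hacyc x (RPath.comp qz (.cons (.nil z) hzx))
                rw [RPath.comp_length] at hcyc
                simp [RPath.length] at hcyc
              · refine ⟨a', b', hEE' _ _ hab'' hxy', ?_, ?_⟩
                · exact hreach (RPath.comp (RPath.comp q' (.cons (.nil z) hzx)) qx)
                · exact hreach r'
          · push_neg at hy
            obtain ⟨z, hz⟩ := hy
            have hyz : 0 < G y z := Nat.pos_of_ne_zero hz
            obtain ⟨u, hu⟩ := exists_walk_rell (hconn i z)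
            have hm := hl1 i z
            have hmc : rell (fun a b => 0 < G a b) i z = 0 ∨
                rell (fun a b => 0 < G a b) i z = 1 := by omega
            rcases hmc with hm0 | hm1
            · obtain ⟨s⟩ := RWalk.zero_path u (hu.trans hm0)
              refine ⟨y, z, hEE' _ _ hyz (fun h => hxy h.1.symm), ?_, ?_⟩
              · exact hreach (RPath.comp (.cons (.nil y) hyz) s)
              · exact hreach (RPath.comp ry (.cons (.nil y) hyz))
            · obtain ⟨a', b', hab'', ⟨q'⟩, ⟨r'⟩⟩ := RWalk.one_path u (hu.trans hm1)
              -- q' : RPath E a' i, r' : RPath E z b'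
              by_cases hxy' : a' = x ∧ b' = y
              · exfalso
                have rz : RPath (fun a b => 0 < G a b) z y := by
                  rw [← hxy'.2]; exact r'
                have hcyc := hacyc y (RPath.comp (.cons (.nil y) hyz) rz)
                rw [RPath.comp_length] at hcyc
                simp [RPath.length] at hcyc
              · refine ⟨a', b', hEE' _ _ hab'' hxy', ?_, ?_⟩
                · exact hreach q'
                · exact hreach (RPath.comp (RPath.comp ry (.cons (.nil y) hyz)) r')
        · exact ⟨a, b, hEE' _ _ hab hab', hreach q, hreach r⟩
      obtain ⟨a', b', he', ⟨q'⟩, ⟨r'⟩⟩ := key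
      -- a walk in E' with exactly one forward arrow
      have hle : rell E' i j ≤ 1 := by
        have h := rell_le_of_walk (RWalk.append (.fwd (RPath.toBwd q') he') (RPath.toBwd r'))
        rw [RWalk.cplus_append] at h
        simpa [RWalk.cplus, RPath.toBwd_cplus] using h
      have hne : rell E' i j ≠ 0 := by
        intro h0'
        obtain ⟨w', hw'⟩ := exists_walk_rell
          (⟨RWalk.append (.fwd (RPath.toBwd q') he') (RPath.toBwd r')⟩ :
            Nonempty (RWalk E' i j))
        obtain ⟨s'⟩ := RWalk.zero_path w' (hw'.trans h0')
        obtain ⟨s⟩ := RPath.mapH hE'E s'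
        have := rell_le_of_walk (RPath.toBwd s)
        rw [RPath.toBwd_cplus] at this
        omega
      rw [h1]
      omega
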